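/- Let 𝐱 = (x₁,…,xₙ) be a tuple of distinct points in [0,1). Then there exists a unique minimal supporting partition for 𝐱 among standard dyadic partitions: a partition P of [0,1) into standard dyadic intervals such that each interval of P contains at most one xⱼ, and no strictly coarser standard dyadic partition has this property. -/

import Mathlib

/-- The standard dyadic interval `[a/2^m, (a+1)/2^m)`. -/
noncomputable def dyadicIco (m a : ℕ) : Set ℝ :=
  Set.Ico ((a : ℝ) / 2 ^ m) (((a : ℝ) + 1) / 2 ^ m)

/-- A finite set of pairs `(m, a)` is a standard dyadic partition of `[0,1)` if the
corresponding intervals are valid, pairwise disjoint, and cover `[0,1)`. -/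
noncomputable def IsSDP (P : Finset (ℕ × ℕ)) : Prop :=
  (∀ p ∈ P, p.2 < 2 ^ p.1) ∧
  (∀ p ∈ P, ∀ q ∈ P, p ≠ q → Disjoint (dyadicIco p.1 p.2) (dyadicIco q.1 q.2)) ∧
  (⋃ p ∈ P, dyadicIco p.1 p.2) = Set.Ico (0 : ℝ) 1

/-- `Q` refines `P`: every interval of `Q` is contained in an interval of `P`. -/
noncomputable def Refines (Q P : Finset (ℕ × ℕ)) : Prop :=
  ∀ q ∈ Q, ∃ p ∈ P, dyadicIco q.1 q.2 ⊆ dyadicIco p.1 p.2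

/-- `P` supports the tuple `xs`: each interval of `P` contains at most one point of `xs`. -/
noncomputable def Supports {n : ℕ} (P : Finset (ℕ × ℕ)) (xs : Fin n → ℝ) : Prop :=
  ∀ p ∈ P, ∀ i j : Fin n,
    xs i ∈ dyadicIco p.1 p.2 → xs j ∈ dyadicIco p.1 p.2 → i = j

open Set

private lemma two_pow_pos' (m : ℕ) : (0:ℝ) < 2 ^ m := by positivity

lemma dyadic_mem_iff {m a : ℕ} {x : ℝ} :
    x ∈ dyadicIco m a ↔ (a:ℝ) ≤ x * 2^m ∧ x * 2^m < (a:ℝ) + 1 := by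
  unfold dyadicIco
  rw [Set.mem_Ico, div_le_iff₀ (two_pow_pos' m), lt_div_iff₀ (two_pow_pos' m)]

lemma dyadic_left_mem (m a : ℕ) : ((a:ℝ)/2^m) ∈ dyadicIco m a := by
  rw [dyadic_mem_iff]
  rw [div_mul_cancel₀]
  · constructor <;> linarith
  · exact ne_of_gt (two_pow_pos' m)

lemma dyadic_subset_of_nat {m k a b : ℕ} (hkm : k ≤ m)
    (h1 : b * 2^(m-k) ≤ a) (h2 : a + 1 ≤ (b+1) * 2^(m-k)) :
    dyadicIco m a ⊆ dyadicIco k b := by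
  intro x hx
  rw [dyadic_mem_iff] at hx ⊢
  have hpow : (2:ℝ)^m = 2^k * 2^(m-k) := by
    rw [← pow_add]; congr 1; omega
  have h1' : (b:ℝ) * 2^(m-k) ≤ a := by exact_mod_cast h1
  have h2' : (a:ℝ) + 1 ≤ ((b:ℝ)+1) * 2^(m-k) := by exact_mod_cast h2
  obtain ⟨hxa, hxb⟩ := hx
  rw [hpow] at hxa hxb
  constructor
  · nlinarith [two_pow_pos' (m-k), two_pow_pos' k]
  · nlinarith [two_pow_pos' (m-k), two_pow_pos' k]

lemma dyadic_nat_of_not_disjoint {m k a b : ℕ} (hkm : k ≤ m)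
    (h : ¬ Disjoint (dyadicIco m a) (dyadicIco k b)) :
    b * 2^(m-k) ≤ a ∧ a + 1 ≤ (b+1) * 2^(m-k) := by
  rw [Set.not_disjoint_iff] at h
  obtain ⟨x, hx1, hx2⟩ := h
  rw [dyadic_mem_iff] at hx1 hx2
  have hpow : (2:ℝ)^m = 2^k * 2^(m-k) := by
    rw [← pow_add]; congr 1; omega
  obtain ⟨ha1, ha2⟩ := hx1
  obtain ⟨hb1, hb2⟩ := hx2
  rw [hpow] at ha1 ha2
  constructor
  · by_contra hc
    push_neg at hc
    have hc' : (a:ℝ) + 1 ≤ (b:ℝ) * 2^(m-k) := by exact_mod_cast hc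
    nlinarith [two_pow_pos' (m-k), two_pow_pos' k]
  · by_contra hc
    push_neg at hc
    have hc0 : (b+1) * 2^(m-k) ≤ a := by omega
    have hc' : ((b:ℝ)+1) * 2^(m-k) ≤ (a:ℝ) := by exact_mod_cast hc0
    nlinarith [two_pow_pos' (m-k), two_pow_pos' k]

lemma dyadic_subset_of_not_disjoint {m k a b : ℕ} (hkm : k ≤ m)
    (h : ¬ Disjoint (dyadicIco m a) (dyadicIco k b)) :
    dyadicIco m a ⊆ dyadicIco k b := by
  obtain ⟨h1, h2⟩ := dyadic_nat_of_not_disjoint hkm h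
  exact dyadic_subset_of_nat hkm h1 h2

lemma dyadic_child_subset {m a : ℕ} (hm : 1 ≤ m) :
    dyadicIco m a ⊆ dyadicIco (m-1) (a/2) := by
  apply dyadic_subset_of_nat (by omega)
  · have h : m - (m-1) = 1 := by omega
    rw [h, pow_one]; omega
  · have h : m - (m-1) = 1 := by omega
    rw [h, pow_one]; omega

lemma dyadic_subset_unit {m a : ℕ} (ha : a < 2^m) : dyadicIco m a ⊆ Ico 0 1 := by
  intro x hx
  rw [dyadic_mem_iff] at hx
  have ha' : (a:ℝ) + 1 ≤ 2^m := by exact_mod_cast Nat.lt_iff_add_one_le.1 ha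
  have h0 : (0:ℝ) ≤ a := Nat.cast_nonneg a
  constructor
  · nlinarith [two_pow_pos' m]
  · nlinarith [two_pow_pos' m]

lemma mem_dyadic_floor {x : ℝ} (hx : x ∈ Ico (0:ℝ) 1) (m : ℕ) :
    x ∈ dyadicIco m ⌊x * 2^m⌋₊ ∧ ⌊x * 2^m⌋₊ < 2^m := by
  have h0 : 0 ≤ x * 2^m := mul_nonneg hx.1 (le_of_lt (two_pow_pos' m))
  constructor
  · rw [dyadic_mem_iff]
    exact ⟨Nat.floor_le h0, Nat.lt_floor_add_one _⟩
  · rw [Nat.floor_lt h0]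
    push_cast
    nlinarith [two_pow_pos' m, hx.2]

lemma floor_parent {x : ℝ} (hx : 0 ≤ x) {m : ℕ} (hm : 1 ≤ m) :
    ⌊x * 2^m⌋₊ / 2 = ⌊x * 2^(m-1)⌋₊ := by
  have h2 : ((2:ℕ):ℝ) = 2 := by norm_num
  rw [← Nat.floor_div_natCast, h2]
  congr 1
  have : (2:ℝ)^m = 2^(m-1) * 2 := by rw [← pow_succ]; congr 1; omega
  rw [this]; ring

lemma dyadic_inj {m a k b : ℕ} (h : dyadicIco m a = dyadicIco k b) : m = k ∧ a = b := by
  have hk := two_pow_pos' k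
  have hm' := two_pow_pos' m
  have hmem := dyadic_left_mem m a
  rw [dyadicIco, Set.mem_Ico] at hmem
  unfold dyadicIco at h
  rw [Set.Ico_eq_Ico_iff (Or.inl (lt_of_le_of_lt hmem.1 hmem.2))] at h
  obtain ⟨he0, he1⟩ := h
  rw [div_eq_div_iff (ne_of_gt hm') (ne_of_gt hk)] at he0
  rw [div_eq_div_iff (ne_of_gt hm') (ne_of_gt hk)] at he1
  have he := he0
  have hpe : (2:ℝ)^k = 2^m := by nlinarith
  have hmk : m = k := by
    have : ((2^k : ℕ) : ℝ) = ((2^m : ℕ) : ℝ) := by push_cast; exact hpe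
    have := Nat.cast_injective this
    exact (Nat.pow_right_injective (le_refl 2) this).symm
  subst hmk
  refine ⟨rfl, ?_⟩
  have : (a:ℝ) = b := by nlinarith
  exact_mod_cast this

def Good {n : ℕ} (xs : Fin n → ℝ) (p : ℕ × ℕ) : Prop :=
  p.2 < 2 ^ p.1 ∧ ∀ i j : Fin n, xs i ∈ dyadicIco p.1 p.2 → xs j ∈ dyadicIco p.1 p.2 → i = j

def MaxGood {n : ℕ} (xs : Fin n → ℝ) (p : ℕ × ℕ) : Prop :=
  Good xs p ∧ (p.1 = 0 ∨ ¬ Good xs (p.1 - 1, p.2 / 2))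

lemma good_mono {n : ℕ} {xs : Fin n → ℝ} {p q : ℕ × ℕ} (hq : Good xs q)
    (hsub : dyadicIco p.1 p.2 ⊆ dyadicIco q.1 q.2) (hval : p.2 < 2 ^ p.1) :
    Good xs p :=
  ⟨hval, fun i j hi hj => hq.2 i j (hsub hi) (hsub hj)⟩

lemma parent_valid {m a : ℕ} (h : a < 2^m) (hm : 1 ≤ m) : a / 2 < 2^(m-1) := by
  have : 2^m = 2 * 2^(m-1) := by rw [← pow_succ']; congr 1; omega
  omega

lemma exists_level {n : ℕ} (xs : Fin n → ℝ) (hinj : Function.Injective xs) :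
    ∃ M : ℕ, ∀ m, M ≤ m → ∀ a, a < 2^m → Good xs (m, a) := by
  have key : ∀ p : Fin n × Fin n, ∃ N : ℕ, p.1 ≠ p.2 → (1:ℝ)/2^N < |xs p.1 - xs p.2| := by
    intro p
    by_cases h : p.1 = p.2
    · exact ⟨0, fun hc => absurd h hc⟩
    · have hne : xs p.1 ≠ xs p.2 := fun he => h (hinj he)
      have hpos : 0 < |xs p.1 - xs p.2| := abs_pos.2 (sub_ne_zero.2 hne)
      obtain ⟨N, hN⟩ := pow_unbounded_of_one_lt (1 / |xs p.1 - xs p.2|) one_lt_two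
      refine ⟨N, fun _ => ?_⟩
      rw [div_lt_iff₀ hpos] at hN
      rw [div_lt_iff₀ (two_pow_pos' N)]
      nlinarith
  choose Nf hNf using key
  refine ⟨Finset.univ.sup Nf, fun m hm a _ => ⟨by assumption, fun i j hi hj => ?_⟩⟩
  by_contra hij
  have hNij : Nf (i, j) ≤ m := le_trans (Finset.le_sup (Finset.mem_univ (i,j))) hm
  have hgap := hNf (i, j) hij
  rw [dyadic_mem_iff] at hi hj
  have hlt : |xs i - xs j| < 1/2^m := by
    rw [abs_sub_lt_iff]
    constructor
    · rw [lt_div_iff₀ (two_pow_pos' m)]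
      nlinarith
    · rw [lt_div_iff₀ (two_pow_pos' m)]
      nlinarith
  have hmono : (1:ℝ)/2^m ≤ 1/2^(Nf (i,j)) := by
    apply div_le_div_of_nonneg_left (by norm_num) (two_pow_pos' (Nf (i,j)))
    exact pow_le_pow_right₀ (by norm_num) hNij
  simp only at hgap
  linarith

lemma exists_maxGood {n : ℕ} (xs : Fin n → ℝ) {M : ℕ}
    (hM : ∀ m, M ≤ m → ∀ a, a < 2^m → Good xs (m, a))
    {x : ℝ} (hx : x ∈ Set.Ico (0:ℝ) 1) :
    ∃ p : ℕ × ℕ, MaxGood xs p ∧ x ∈ dyadicIco p.1 p.2 := by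
  classical
  have hex : ∃ m, Good xs (m, ⌊x * 2^m⌋₊) :=
    ⟨M, hM M le_rfl _ (mem_dyadic_floor hx M).2⟩
  refine ⟨(Nat.find hex, ⌊x * 2^(Nat.find hex)⌋₊), ⟨Nat.find_spec hex, ?_⟩,
    (mem_dyadic_floor hx _).1⟩
  rcases Nat.eq_zero_or_pos (Nat.find hex) with h0 | h0
  · exact Or.inl h0
  · right
    intro hgood
    have hlt : Nat.find hex - 1 < Nat.find hex := by omega
    apply Nat.find_min hex hlt
    have hfp := floor_parent hx.1 h0
    simpa [hfp] using hgood

lemma maxGood_level_le {n : ℕ} {xs : Fin n → ℝ} {M : ℕ}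
    (hM : ∀ m, M ≤ m → ∀ a, a < 2^m → Good xs (m, a))
    {p : ℕ × ℕ} (hp : MaxGood xs p) : p.1 ≤ M := by
  by_contra hc
  push_neg at hc
  rcases hp.2 with h0 | hng
  · omega
  · exact hng (hM (p.1 - 1) (by omega) _ (parent_valid hp.1.1 (by omega)))

lemma maxGood_subset {n : ℕ} {xs : Fin n → ℝ} {p q : ℕ × ℕ}
    (hp : MaxGood xs p) (hq : Good xs q)
    (hnd : ¬ Disjoint (dyadicIco p.1 p.2) (dyadicIco q.1 q.2)) :
    dyadicIco q.1 q.2 ⊆ dyadicIco p.1 p.2 := by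
  have hle : p.1 ≤ q.1 := by
    by_contra hcon
    push_neg at hcon
    have hm1 : 1 ≤ p.1 := by omega
    have hchild := dyadic_child_subset (a := p.2) hm1
    have hnd' : ¬ Disjoint (dyadicIco (p.1-1) (p.2/2)) (dyadicIco q.1 q.2) := by
      rw [Set.not_disjoint_iff] at hnd ⊢
      obtain ⟨x, hx1, hx2⟩ := hnd
      exact ⟨x, hchild hx1, hx2⟩
    have hsub : dyadicIco (p.1-1) (p.2/2) ⊆ dyadicIco q.1 q.2 :=
      dyadic_subset_of_not_disjoint (by omega) hnd'
    have hgp : Good xs ((p.1-1, p.2/2) : ℕ × ℕ) :=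
      good_mono hq hsub (parent_valid hp.1.1 hm1)
    rcases hp.2 with h0 | hng
    · omega
    · exact hng hgp
  exact dyadic_subset_of_not_disjoint hle (fun h => hnd (Disjoint.symm h))


lemma eq_of_refines_refines {P Q : Finset (ℕ × ℕ)} (hP : IsSDP P) (hQ : IsSDP Q)
    (h1 : Refines P Q) (h2 : Refines Q P) : Q = P := by
  have key : ∀ A B : Finset (ℕ × ℕ), IsSDP A → Refines A B → Refines B A → A ⊆ B := by
    intro A B hA hAB hBA a ha
    obtain ⟨b, hb, hab⟩ := hAB a ha
    obtain ⟨a', ha', hba⟩ := hBA b hb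
    have haa' : a = a' := by
      by_contra hne
      have hdisj := hA.2.1 a ha a' ha' hne
      have hx : ((a.2:ℝ)/2^a.1) ∈ dyadicIco a'.1 a'.2 := hba (hab (dyadic_left_mem a.1 a.2))
      exact Set.disjoint_left.1 hdisj (dyadic_left_mem a.1 a.2) hx
    subst haa'
    have heq : dyadicIco a.1 a.2 = dyadicIco b.1 b.2 := Set.Subset.antisymm hab hba
    obtain ⟨e1, e2⟩ := dyadic_inj heq
    have : a = b := Prod.ext e1 e2
    exact this ▸ hb
  exact Finset.Subset.antisymm (key Q P hQ h2 h1) (key P Q hP h1 h2)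

lemma master {n : ℕ} (xs : Fin n → ℝ) (hinj : Function.Injective xs) :
    ∃ P : Finset (ℕ × ℕ), IsSDP P ∧ Supports P xs ∧
      ∀ Q : Finset (ℕ × ℕ), IsSDP Q → Supports Q xs → Refines Q P := by
  classical
  obtain ⟨M, hM⟩ := exists_level xs hinj
  set P : Finset (ℕ × ℕ) :=
    (Finset.range (M+1) ×ˢ Finset.range (2^M)).filter (MaxGood xs) with hPdef
  have hmemP : ∀ p : ℕ × ℕ, p ∈ P ↔ MaxGood xs p := by
    intro p
    simp only [hPdef, Finset.mem_filter, Finset.mem_product, Finset.mem_range]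
    constructor
    · exact fun h => h.2
    · intro h
      have h1 : p.1 ≤ M := maxGood_level_le hM h
      have h2 : p.2 < 2^M := lt_of_lt_of_le h.1.1 (Nat.pow_le_pow_right (by norm_num) h1)
      exact ⟨⟨by omega, h2⟩, h⟩
  have hdisj : ∀ p ∈ P, ∀ q ∈ P, p ≠ q →
      Disjoint (dyadicIco p.1 p.2) (dyadicIco q.1 q.2) := by
    intro p hp q hq hne
    by_contra hnd
    have hp' := (hmemP p).1 hp
    have hq' := (hmemP q).1 hq
    have hs1 : dyadicIco q.1 q.2 ⊆ dyadicIco p.1 p.2 := maxGood_subset hp' hq'.1 hnd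
    have hs2 : dyadicIco p.1 p.2 ⊆ dyadicIco q.1 q.2 :=
      maxGood_subset hq' hp'.1 (fun h => hnd (Disjoint.symm h))
    obtain ⟨e1, e2⟩ := dyadic_inj (Set.Subset.antisymm hs2 hs1)
    exact hne (Prod.ext e1 e2)
  have hcover : (⋃ p ∈ P, dyadicIco p.1 p.2) = Set.Ico (0:ℝ) 1 := by
    apply Set.Subset.antisymm
    · intro x hx
      simp only [Set.mem_iUnion] at hx
      obtain ⟨p, hp, hxp⟩ := hx
      exact dyadic_subset_unit ((hmemP p).1 hp).1.1 hxp
    · intro x hx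
      obtain ⟨p, hp, hxp⟩ := exists_maxGood xs hM hx
      simp only [Set.mem_iUnion]
      exact ⟨p, (hmemP p).2 hp, hxp⟩
  refine ⟨P, ⟨fun p hp => ((hmemP p).1 hp).1.1, hdisj, hcover⟩,
    fun p hp => ((hmemP p).1 hp).1.2, ?_⟩
  intro Q hQ hSup q hq
  have hgoodq : Good xs q := ⟨hQ.1 q hq, hSup q hq⟩
  have hxq : ((q.2:ℝ)/2^q.1) ∈ dyadicIco q.1 q.2 := dyadic_left_mem q.1 q.2
  have hxunit : ((q.2:ℝ)/2^q.1) ∈ Set.Ico (0:ℝ) 1 := dyadic_subset_unit hgoodq.1 hxq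
  obtain ⟨p, hp, hxp⟩ := exists_maxGood xs hM hxunit
  refine ⟨p, (hmemP p).2 hp, maxGood_subset hp hgoodq ?_⟩
  exact Set.not_disjoint_iff.2 ⟨_, hxp, hxq⟩

/-- Every tuple of distinct points of `[0,1)` has a unique minimal supporting
standard dyadic partition. -/
theorem exists_unique_minimal_supporting_partition
    {n : ℕ} (xs : Fin n → ℝ) (hinj : Function.Injective xs)
    (hmem : ∀ i, xs i ∈ Set.Ico (0 : ℝ) 1) :
    ∃! P : Finset (ℕ × ℕ), IsSDP P ∧ Supports P xs ∧
      ∀ Q : Finset (ℕ × ℕ), IsSDP Q → Supports Q xs → Refines P Q → Q = P := by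
  obtain ⟨P, hPsdp, hPsup, hPref⟩ := master xs hinj
  refine ⟨P, ⟨hPsdp, hPsup, ?_⟩, ?_⟩
  · intro Q hQsdp hQsup hPQ
    exact eq_of_refines_refines hPsdp hQsdp hPQ (hPref Q hQsdp hQsup)
  · intro P' ⟨hP'sdp, hP'sup, hP'min⟩
    exact (hP'min P hPsdp hPsup (hPref P' hP'sdp hP'sup)).symm
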